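/- Let G = A_Γ be an even Artin group of FC-type and let a be a vertex of Γ. Then the centralizer C_G(a) of a in G is contained in the standard parabolic subgroup A_{st_Γ(a)}, where st_Γ(a) is the induced subgraph on a together with all vertices adjacent to a. -/

import Mathlib

/-- A labeled simplicial graph: a simple graph whose edges carry labels `≥ 2`. -/
structure LabeledGraph (V : Type) where
  Adj : V → V → Prop
  symm : ∀ {u v}, Adj u v → Adj v u
  loopless : ∀ v, ¬ Adj v v
  label : V → V → ℕ
  label_symm : ∀ u v, label u v = label v u
  two_le_label : ∀ {u v}, Adj u v → 2 ≤ label u v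

namespace LabeledGraph

variable {V : Type} (Γ : LabeledGraph V)

/-- The alternating word `uvuv⋯` of length `m` in the free group on the vertices. -/
def artinWord (u v : V) (m : ℕ) : FreeGroup V :=
  ((List.range m).map (fun i => FreeGroup.of (if i % 2 = 0 then u else v))).prod

/-- The Artin relations of a labeled graph. -/
def artinRels : Set (FreeGroup V) :=
  { r | ∃ u v, Γ.Adj u v ∧
      r = artinWord u v (Γ.label u v) * (artinWord v u (Γ.label u v))⁻¹ }

/-- The Artin group of a labeled graph. -/
abbrev ArtinGroup := PresentedGroup Γ.artinRels

/-- The canonical generator of the Artin group corresponding to a vertex. -/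
def gen (v : V) : Γ.ArtinGroup := PresentedGroup.of v

/-- The standard parabolic subgroup associated to a set of vertices. -/
def parabolic (S : Set V) : Subgroup Γ.ArtinGroup :=
  Subgroup.closure (Γ.gen '' S)

/-- An Artin group (graph) is even if all labels are even. -/
def IsEven : Prop := ∀ {u v}, Γ.Adj u v → Even (Γ.label u v)

/-- An even Artin group is of FC-type iff every triangle has at least two labels equal to 2. -/
def IsEvenFC : Prop := Γ.IsEven ∧
  ∀ {u v w}, Γ.Adj u v → Γ.Adj v w → Γ.Adj u w →
    (Γ.label u v = 2 ∧ Γ.label v w = 2) ∨ (Γ.label u v = 2 ∧ Γ.label u w = 2) ∨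
      (Γ.label v w = 2 ∧ Γ.label u w = 2)

/-- A parabolic subgroup: a conjugate of a standard parabolic subgroup. -/
def IsParabolic (P : Subgroup Γ.ArtinGroup) : Prop :=
  ∃ (g : Γ.ArtinGroup) (S : Set V),
    P = (Γ.parabolic S).map (MulAut.conj g).toMonoidHom

end LabeledGraph


open Monoid Function

namespace CentStarAux

variable {ι : Type*} {G : ι → Type*} [∀ i, Group (G i)] {H : Type*} [Group H]
  {φ : ∀ i, H →* G i}

lemma prod_reverse_inv (L : List (Σ i, G i)) :
    ((L.reverse.map (fun l => (⟨l.1, l.2⁻¹⟩ : Σ i, G i))).map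
      (fun l => (CoprodI.of l.2 : CoprodI G))).prod
      = ((L.map fun l => (CoprodI.of l.2 : CoprodI G)).prod)⁻¹ := by
  induction L with
  | nil => simp
  | cons hd tl ih =>
    simp only [List.reverse_cons, List.map_append, List.prod_append, List.map_cons,
      List.map_nil, List.prod_cons, List.prod_nil, mul_one, ih]
    rw [mul_inv_rev]
    simp

lemma exists_conj_word (w₁ : CoprodI.Word G) (hred : PushoutI.Reduced φ w₁) (i₀ : ι)
    (c : G i₀) (hc : c ∉ (φ i₀).range)
    (hlast : ∀ l ∈ w₁.toList.getLast?, Sigma.fst l ≠ i₀) :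
    ∃ W : CoprodI.Word G, PushoutI.Reduced φ W ∧
      W.toList.length = 2 * w₁.toList.length + 1 ∧
      W.prod = w₁.prod * CoprodI.of c * (w₁.prod)⁻¹ := by
  classical
  have hc1 : c ≠ 1 := fun h => hc (h ▸ ⟨1, map_one _⟩)
  set L := w₁.toList with hL
  set M : List (Σ i, G i) := L.reverse.map (fun l => ⟨l.1, l.2⁻¹⟩) with hM
  have hMhead : ∀ y ∈ M.head?, Sigma.fst y ≠ i₀ := by
    intro y hy
    rw [hM, List.head?_map, List.head?_reverse] at hy
    simp only [Option.mem_map] at hy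
    obtain ⟨l, hl, rfl⟩ := hy
    exact hlast l hl
  have hne_one : ∀ l ∈ L ++ ⟨i₀, c⟩ :: M, Sigma.snd l ≠ 1 := by
    intro l hl
    rcases List.mem_append.1 hl with h | h
    · exact w₁.ne_one l h
    · rcases List.mem_cons.1 h with rfl | h
      · exact hc1
      · rw [hM] at h
        obtain ⟨l', hl', rfl⟩ := List.mem_map.1 h
        simp only [ne_eq, inv_eq_one]
        exact w₁.ne_one l' (List.mem_reverse.1 hl')
  have hchainM : M.Chain' (fun l l' => Sigma.fst l ≠ Sigma.fst l') := by
    rw [List.Chain', hM, List.isChain_map, List.isChain_reverse]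
    exact List.IsChain.imp (fun a b h => by exact fun h' => h h'.symm) w₁.chain_ne
  have hchain : (L ++ ⟨i₀, c⟩ :: M).Chain' (fun l l' => Sigma.fst l ≠ Sigma.fst l') := by
    rw [List.Chain', List.isChain_append]
    refine ⟨w₁.chain_ne, ?_, ?_⟩
    · rw [List.isChain_cons]
      exact ⟨fun y hy => (hMhead y hy).symm, hchainM⟩
    · intro x hx y hy
      simp only [List.head?_cons, Option.mem_some_iff] at hy
      subst hy
      exact hlast x hx
  refine ⟨⟨L ++ ⟨i₀, c⟩ :: M, hne_one, hchain⟩, ?_, ?_, ?_⟩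
  · intro l hl
    rcases List.mem_append.1 hl with h | h
    · exact hred l h
    · rcases List.mem_cons.1 h with rfl | h
      · exact hc
      · rw [hM] at h
        obtain ⟨l', hl', rfl⟩ := List.mem_map.1 h
        simp only [ne_eq]
        intro hmem
        exact hred l' (List.mem_reverse.1 hl') (by simpa using Subgroup.inv_mem _ hmem)
  · simp [hM]
    omega
  · show (( (L ++ ⟨i₀, c⟩ :: M).map fun l => (CoprodI.of l.2 : CoprodI G)).prod) = _
    rw [List.map_append, List.prod_append, List.map_cons, List.prod_cons]
    rw [hM, prod_reverse_inv]
    show _ = ((L.map fun l => (CoprodI.of l.2 : CoprodI G)).prod) * _ * _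
    simp [CoprodI.Word.prod, mul_assoc]
    rfl

lemma reduced_length (hφ : ∀ i, Injective (φ i)) {w₁ w₂ : CoprodI.Word G}
    (h1 : PushoutI.Reduced φ w₁) (h2 : PushoutI.Reduced φ w₂)
    (heq : PushoutI.ofCoprodI (φ := φ) w₁.prod = PushoutI.ofCoprodI w₂.prod) :
    w₁.toList.length = w₂.toList.length := by
  classical
  obtain ⟨d⟩ := PushoutI.NormalWord.transversal_nonempty φ hφ
  obtain ⟨w₁', hp1, hm1⟩ := h1.exists_normalWord_prod_eq d
  obtain ⟨w₂', hp2, hm2⟩ := h2.exists_normalWord_prod_eq d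
  have h12 : w₁' = w₂' := PushoutI.NormalWord.prod_injective (by rw [hp1, hp2, heq])
  have := congrArg List.length hm1
  have h2l := congrArg List.length hm2
  rw [h12] at this
  simp only [List.length_map] at this h2l
  omega

theorem mem_of_range_of_commute (hφ : ∀ i, Injective (φ i)) (i₀ : ι) (x : G i₀)
    (hx : ∀ y : G i₀, y * x * y⁻¹ ∉ (φ i₀).range)
    (g : PushoutI φ) (hg : g * PushoutI.of i₀ x = PushoutI.of i₀ x * g) :
    g ∈ (PushoutI.of (φ := φ) i₀).range := by
  classical
  obtain ⟨d⟩ := PushoutI.NormalWord.transversal_nonempty φ hφ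
  set w : PushoutI.NormalWord d := g • PushoutI.NormalWord.empty with hw
  have hprod : w.prod = g := by
    rw [hw, PushoutI.NormalWord.prod_smul]; simp
  have hletters : ∀ l ∈ w.toList, Sigma.snd l ∉ (φ l.1).range := by
    intro l hl hmem
    have h1 : l.2 ∈ d.set l.1 := w.normalized l.1 l.2 hl
    have h2 : l.2 ≠ 1 := w.ne_one l hl
    have hinj := (d.compl l.1).1
    have heq := hinj (a₁ := (⟨⟨l.2, by simpa using hmem⟩, ⟨1, d.one_mem l.1⟩⟩ :
        ((φ l.1).range : Set (G l.1)) × (d.set l.1)))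
      (a₂ := ⟨⟨1, by exact ⟨1, map_one _⟩⟩, ⟨l.2, h1⟩⟩) (by simp)
    have := congrArg (fun p => (p.2 : G l.1)) heq
    simp at this
    exact h2 this.symm
  have hredw : PushoutI.Reduced φ w.toWord := fun l hl => hletters l hl
  set h0 := w.head with hh0
  set U : PushoutI φ := PushoutI.ofCoprodI w.toWord.prod with hU0
  have hdecomp : g = PushoutI.base φ h0 * U := by rw [← hprod]; rfl
  set x₂ : G i₀ := (φ i₀ h0)⁻¹ * x * (φ i₀ h0) with hx₂def
  have hx₂conj : ∀ y : G i₀, y * x₂ * y⁻¹ ∉ (φ i₀).range := by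
    intro y
    have h := hx (y * (φ i₀ h0)⁻¹)
    have : y * (φ i₀ h0)⁻¹ * x * (y * (φ i₀ h0)⁻¹)⁻¹ = y * x₂ * y⁻¹ := by
      rw [hx₂def]; group
    rwa [this] at h
  have hx₂ : x₂ ∉ (φ i₀).range := by simpa using hx₂conj 1
  have hx₂1 : x₂ ≠ 1 := fun h => hx₂ (h ▸ ⟨1, map_one _⟩)
  have hxr : x ∉ (φ i₀).range := by simpa using hx 1
  have hx1 : x ≠ 1 := fun h => hxr (h ▸ ⟨1, map_one _⟩)
  have hUconj : U * PushoutI.of i₀ x * U⁻¹ = PushoutI.of i₀ x₂ := by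
    have h1 : PushoutI.base φ h0 * U * PushoutI.of i₀ x
        = PushoutI.of i₀ x * (PushoutI.base φ h0 * U) := by rw [← hdecomp]; exact hg
    have h3 : PushoutI.base φ h0 * U * PushoutI.of i₀ x * U⁻¹
        = PushoutI.of i₀ x * PushoutI.base φ h0 := by
      rw [h1]; group
    have h2 : U * PushoutI.of i₀ x * U⁻¹
        = (PushoutI.base φ h0)⁻¹ * PushoutI.of i₀ x * PushoutI.base φ h0 := by
      calc U * PushoutI.of i₀ x * U⁻¹
          = (PushoutI.base φ h0)⁻¹ *
            (PushoutI.base φ h0 * U * PushoutI.of i₀ x * U⁻¹) := by group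
        _ = (PushoutI.base φ h0)⁻¹ * (PushoutI.of i₀ x * PushoutI.base φ h0) := by rw [h3]
        _ = (PushoutI.base φ h0)⁻¹ * PushoutI.of i₀ x * PushoutI.base φ h0 := by group
    rw [h2, hx₂def, map_mul, map_mul, map_inv, PushoutI.of_apply_eq_base]
  -- the single letter word ⟨i₀, x₂⟩
  set W₂ : CoprodI.Word G := ⟨[⟨i₀, x₂⟩],
    by intro l hl; rw [List.mem_singleton] at hl; subst hl; exact hx₂1,
    List.isChain_singleton _⟩ with hW₂
  have hW₂red : PushoutI.Reduced φ W₂ := by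
    intro l hl
    rw [hW₂] at hl
    simp only [List.mem_singleton] at hl
    subst hl; exact hx₂
  have hW₂prod : PushoutI.ofCoprodI (φ := φ) W₂.prod = PushoutI.of i₀ x₂ := by
    simp [hW₂, CoprodI.Word.prod]
  by_cases hL : w.toList = []
  · refine ⟨φ i₀ h0, ?_⟩
    rw [PushoutI.of_apply_eq_base, hdecomp]
    have : w.toWord.prod = 1 := by
      have : w.toWord.toList = [] := hL
      simp [CoprodI.Word.prod, this]
    rw [hU0, this]
    simp
  · obtain ⟨L', l₀, hsplit⟩ : ∃ L' l₀, w.toList = L' ++ [l₀] :=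
      ⟨w.toList.dropLast, w.toList.getLast hL, (List.dropLast_append_getLast hL).symm⟩
    obtain ⟨j, y⟩ := l₀
    have hchain := w.chain_ne
    rw [show w.toWord.toList = w.toList from rfl, hsplit] at hchain
    have hchainsplit := List.isChain_append.1 hchain
    have hw'ne : ∀ l ∈ L', Sigma.snd l ≠ 1 := by
      intro l hl
      refine w.ne_one l ?_
      rw [show w.toWord.toList = w.toList from rfl, hsplit]
      exact List.mem_append_left _ hl
    set w' : CoprodI.Word G := ⟨L', hw'ne, hchainsplit.1⟩ with hw'
    have hw'red : PushoutI.Reduced φ w' := by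
      intro l hl
      exact hletters l (by rw [hsplit]; exact List.mem_append_left _ hl)
    have hlast' : ∀ l ∈ L'.getLast?, Sigma.fst l ≠ j := by
      intro l hl
      exact hchainsplit.2.2 l hl ⟨j, y⟩ rfl
    have hWsplit : w.toWord.prod = w'.prod * CoprodI.of y := by
      show ((w.toWord.toList.map fun l => (CoprodI.of l.2 : CoprodI G)).prod) = _
      rw [show w.toWord.toList = w.toList from rfl, hsplit]
      simp [CoprodI.Word.prod, hw']
    by_cases hj : j = i₀
    · subst hj
      obtain ⟨W, hWred, hWlen, hWprod⟩ := exists_conj_word w' hw'red j (y * x * y⁻¹)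
        (hx y) hlast'
      have hWp : PushoutI.ofCoprodI (φ := φ) W.prod = PushoutI.of j x₂ := by
        rw [hWprod]
        rw [← hUconj, hU0, hWsplit]
        simp only [map_mul, map_inv, PushoutI.ofCoprodI_of]
        group
      have hlen := reduced_length hφ hWred hW₂red (by rw [hWp, hW₂prod])
      rw [hWlen, show w'.toList = L' from rfl] at hlen
      have hL' : L' = [] := by
        have : L'.length = 0 := by
          simp only [hW₂, List.length_singleton] at hlen
          omega
        exact List.length_eq_zero_iff.1 this
      refine ⟨φ j h0 * y, ?_⟩
      rw [map_mul, PushoutI.of_apply_eq_base, hdecomp, hU0]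
      congr 1
      have hlist : w.toWord.toList = [⟨j, y⟩] := by
        rw [show w.toWord.toList = w.toList from rfl, hsplit, hL']
        rfl
      simp [CoprodI.Word.prod, hlist]
    · have hlastfull : ∀ l ∈ w.toWord.toList.getLast?, Sigma.fst l ≠ i₀ := by
        intro l hl
        rw [show w.toWord.toList = w.toList from rfl, hsplit, List.getLast?_concat] at hl
        rw [Option.mem_some_iff] at hl
        subst hl
        exact hj
      obtain ⟨W, hWred, hWlen, hWprod⟩ := exists_conj_word w.toWord hredw i₀ x hxr hlastfull
      have hWp : PushoutI.ofCoprodI (φ := φ) W.prod = PushoutI.of i₀ x₂ := by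
        rw [hWprod]
        rw [← hUconj, hU0]
        simp only [map_mul, map_inv, PushoutI.ofCoprodI_of]
      have hlen := reduced_length hφ hWred hW₂red (by rw [hWp, hW₂prod])
      rw [hWlen, show w.toWord.toList = w.toList from rfl] at hlen
      exfalso
      apply hL
      have : w.toList.length = 0 := by
        simp only [hW₂, List.length_singleton] at hlen
        omega
      exact List.length_eq_zero_iff.1 this

end CentStarAux

namespace CentStarAux2

open LabeledGraph

open scoped Classical

variable {V : Type}

lemma artinWord_two_mul (u v : V) (k : ℕ) :
    artinWord u v (2 * k) = (FreeGroup.of u * FreeGroup.of v) ^ k := by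
  induction k with
  | zero => simp [artinWord]
  | succ n ih =>
    have h2 : 2 * (n + 1) = (2 * n + 1) + 1 := by ring
    have e0 : (2 * n) % 2 = 0 := by omega
    have e1 : (2 * n + 1) % 2 = 1 := by omega
    rw [h2, artinWord, List.range_succ, List.map_append, List.prod_append,
      List.range_succ, List.map_append, List.prod_append]
    rw [show ((List.range (2 * n)).map
        (fun i => FreeGroup.of (if i % 2 = 0 then u else v))).prod = artinWord u v (2 * n)
      from rfl]
    rw [ih]
    simp [e0, e1, pow_succ, mul_assoc]

lemma mk_rel_eq_one {rels : Set (FreeGroup V)} {r : FreeGroup V} (h : r ∈ rels) :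
    PresentedGroup.mk rels r = 1 :=
  (QuotientGroup.eq_one_iff r).2 (Subgroup.subset_normalClosure h)

lemma label_eq (Γ : LabeledGraph V) (hE : Γ.IsEven) {u v : V} (h : Γ.Adj u v) :
    Γ.label u v = 2 * (Γ.label u v / 2) := by
  obtain ⟨k, hk⟩ := hE h; omega

lemma braid_mk (Γ : LabeledGraph V) {rels : Set (FreeGroup V)} (hsub : Γ.artinRels ⊆ rels)
    (hE : Γ.IsEven) {u v : V} (h : Γ.Adj u v) :
    (PresentedGroup.of (rels := rels) u * PresentedGroup.of v) ^ (Γ.label u v / 2)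
      = (PresentedGroup.of (rels := rels) v * PresentedGroup.of u) ^ (Γ.label u v / 2) := by
  have hr : artinWord u v (Γ.label u v) * (artinWord v u (Γ.label u v))⁻¹ ∈ rels :=
    hsub ⟨u, v, h, rfl⟩
  have h1 := mk_rel_eq_one hr
  rw [label_eq Γ hE h, artinWord_two_mul, artinWord_two_mul, map_mul, map_inv,
    map_pow, map_pow, map_mul, map_mul, mul_inv_eq_one] at h1
  exact h1

def grels (Γ : LabeledGraph V) (S : Set V) : Set (FreeGroup V) :=
  Γ.artinRels ∪ (FreeGroup.of '' Sᶜ)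

abbrev Q (Γ : LabeledGraph V) (S : Set V) := PresentedGroup (grels Γ S)

lemma lift_artin_rels {K : Type*} [Group K] (Γ : LabeledGraph V) (hE : Γ.IsEven) (f : V → K)
    (hb : ∀ u v, Γ.Adj u v →
      (f u * f v) ^ (Γ.label u v / 2) = (f v * f u) ^ (Γ.label u v / 2)) :
    ∀ r ∈ Γ.artinRels, FreeGroup.lift f r = 1 := by
  rintro r ⟨u, v, huv, rfl⟩
  rw [label_eq Γ hE huv, artinWord_two_mul, artinWord_two_mul, map_mul, map_inv, map_pow,
    map_pow, map_mul, map_mul, FreeGroup.lift_apply_of, FreeGroup.lift_apply_of, mul_inv_eq_one]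
  exact hb u v huv

lemma lift_grels {K : Type*} [Group K] (Γ : LabeledGraph V) (hE : Γ.IsEven) (S : Set V)
    (f : V → K)
    (hb : ∀ u v, Γ.Adj u v →
      (f u * f v) ^ (Γ.label u v / 2) = (f v * f u) ^ (Γ.label u v / 2))
    (hS : ∀ v ∉ S, f v = 1) :
    ∀ r ∈ grels Γ S, FreeGroup.lift f r = 1 := by
  rintro r (hr | ⟨v, hv, rfl⟩)
  · exact lift_artin_rels Γ hE f hb r hr
  · simpa using hS v hv

def qHom {K : Type*} [Group K] (Γ : LabeledGraph V) (hE : Γ.IsEven) (S : Set V) (f : V → K)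
    (hb : ∀ u v, Γ.Adj u v →
      (f u * f v) ^ (Γ.label u v / 2) = (f v * f u) ^ (Γ.label u v / 2))
    (hS : ∀ v ∉ S, f v = 1) : Q Γ S →* K :=
  PresentedGroup.toGroup (lift_grels Γ hE S f hb hS)

@[simp] lemma qHom_of {K : Type*} [Group K] (Γ : LabeledGraph V) (hE : Γ.IsEven) (S : Set V)
    (f : V → K) (hb) (hS) (v : V) :
    qHom Γ hE S f hb hS (PresentedGroup.of v) = f v :=
  PresentedGroup.toGroup.of _

lemma gen_eq_one (Γ : LabeledGraph V) {S : Set V} {v : V} (hv : v ∉ S) :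
    (PresentedGroup.of v : Q Γ S) = 1 :=
  mk_rel_eq_one (Or.inr ⟨v, hv, rfl⟩)

lemma braid_ite (Γ : LabeledGraph V) {rels : Set (FreeGroup V)} (hsub : Γ.artinRels ⊆ rels)
    (hE : Γ.IsEven) (T : Set V) :
    ∀ u v, Γ.Adj u v →
      ((if u ∈ T then (PresentedGroup.of u : PresentedGroup rels) else 1) *
        (if v ∈ T then PresentedGroup.of v else 1)) ^ (Γ.label u v / 2)
      = ((if v ∈ T then (PresentedGroup.of v : PresentedGroup rels) else 1) *
        (if u ∈ T then PresentedGroup.of u else 1)) ^ (Γ.label u v / 2) := by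
  intro u v huv
  by_cases hu : u ∈ T <;> by_cases hv : v ∈ T <;> simp [hu, hv]
  exact braid_mk Γ hsub hE huv

noncomputable def up (Γ : LabeledGraph V) (hE : Γ.IsEven) {T S : Set V} (hTS : T ⊆ S) :
    Q Γ T →* Q Γ S :=
  qHom Γ hE T (fun v => if v ∈ T then PresentedGroup.of v else 1)
    (braid_ite Γ (rels := grels Γ S) Set.subset_union_left hE T) (fun v hv => if_neg hv)

noncomputable def down (Γ : LabeledGraph V) (hE : Γ.IsEven) {T S : Set V} (hTS : T ⊆ S) :
    Q Γ S →* Q Γ T :=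
  qHom Γ hE S (fun v => if v ∈ T then PresentedGroup.of v else 1)
    (braid_ite Γ (rels := grels Γ T) Set.subset_union_left hE T)
    (fun v hv => if_neg (fun h => hv (hTS h)))

lemma down_up (Γ : LabeledGraph V) (hE : Γ.IsEven) {T S : Set V} (hTS : T ⊆ S)
    (q : Q Γ T) : down Γ hE hTS (up Γ hE hTS q) = q := by
  have h : (down Γ hE hTS).comp (up Γ hE hTS) = MonoidHom.id _ := by
    apply PresentedGroup.ext
    intro x
    by_cases hx : x ∈ T
    · simp [up, down, hx]
    · simp [up, down, hx, gen_eq_one Γ hx]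
  exact DFunLike.congr_fun h q

lemma up_injective (Γ : LabeledGraph V) (hE : Γ.IsEven) {T S : Set V} (hTS : T ⊆ S) :
    Function.Injective (up Γ hE hTS) := by
  intro q1 q2 h
  rw [← down_up Γ hE hTS q1, ← down_up Γ hE hTS q2, h]

noncomputable def DHom (Γ : LabeledGraph V) (hE : Γ.IsEven) (a : V) {S : Set V} (ha : a ∈ S) :
    Q Γ S →* Multiplicative ℤ :=
  qHom Γ hE S (fun v => if v = a then Multiplicative.ofAdd 1 else 1)
    (fun u v _ => by rw [mul_comm]) (fun v hv => if_neg (fun h : v = a => hv (h ▸ ha)))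

end CentStarAux2

namespace CentStarAux3

open LabeledGraph CentStarAux2 Monoid
open scoped Classical

variable {V : Type} (Γ : LabeledGraph V) (hE : Γ.IsEven) (a : V)

def B0 : Set V := {v | Γ.Adj a v}
def St : Set V := insert a (B0 Γ a)
def Sc (a : V) : Set V := {a}ᶜ

lemma a_mem_St : a ∈ St Γ a := Set.mem_insert _ _
lemma a_not_mem_B0 : a ∉ B0 Γ a := fun h => Γ.loopless a h
lemma B0_subset_St : B0 Γ a ⊆ St Γ a := Set.subset_insert _ _
lemma B0_subset_Sc : B0 Γ a ⊆ Sc a := by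
  intro v hv
  simp only [Sc, Set.mem_compl_iff, Set.mem_singleton_iff]
  intro h
  rw [h] at hv
  exact Γ.loopless a hv

def Gi : Bool → Type := fun i => Q Γ (Bool.rec (St Γ a) (Sc a) i)

instance GiGroup (i : Bool) : Group (Gi Γ a i) := by
  cases i
  · exact inferInstanceAs (Group (Q Γ (St Γ a)))
  · exact inferInstanceAs (Group (Q Γ (Sc a)))

noncomputable def φP (i : Bool) : Q Γ (B0 Γ a) →* Gi Γ a i :=
  match i with
  | false => up Γ hE (B0_subset_St Γ a)
  | true => up Γ hE (B0_subset_Sc Γ a)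

lemma φP_injective : ∀ i, Function.Injective (φP Γ hE a i) := by
  intro i; cases i
  · exact up_injective Γ hE (B0_subset_St Γ a)
  · exact up_injective Γ hE (B0_subset_Sc Γ a)

noncomputable def fgen : V → PushoutI (φP Γ hE a) := fun v =>
  if v = a then PushoutI.of (φ := φP Γ hE a) false (PresentedGroup.of v)
  else PushoutI.of (φ := φP Γ hE a) true (PresentedGroup.of v)

lemma hconv (v : V) (hv : v ∈ B0 Γ a) :
    PushoutI.of (φ := φP Γ hE a) true (PresentedGroup.of v)
      = PushoutI.of (φ := φP Γ hE a) false (PresentedGroup.of v) := by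
  have h1 : φP Γ hE a true (PresentedGroup.of v) = PresentedGroup.of v := by
    show up Γ hE (B0_subset_Sc Γ a) (PresentedGroup.of v) = _
    simp [up, hv]
  have h2 : φP Γ hE a false (PresentedGroup.of v) = PresentedGroup.of v := by
    show up Γ hE (B0_subset_St Γ a) (PresentedGroup.of v) = _
    simp [up, hv]
  rw [← h1, ← h2, PushoutI.of_apply_eq_base, PushoutI.of_apply_eq_base]

lemma hom_braid {A B : Type*} [Group A] [Group B] (f : A →* B) (x y : A) (k : ℕ)
    (h : (x * y) ^ k = (y * x) ^ k) : (f x * f y) ^ k = (f y * f x) ^ k := by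
  rw [← map_mul, ← map_mul, ← map_pow, ← map_pow, h]

lemma fgen_braid : ∀ u v, Γ.Adj u v →
    (fgen Γ hE a u * fgen Γ hE a v) ^ (Γ.label u v / 2)
      = (fgen Γ hE a v * fgen Γ hE a u) ^ (Γ.label u v / 2) := by
  intro u v huv
  by_cases hu : u = a <;> by_cases hv : v = a
  · rw [hu, hv] at huv
    exact absurd huv (Γ.loopless a)
  · have hvB : v ∈ B0 Γ a := by
      show Γ.Adj a v
      rw [← hu]
      exact huv
    simp only [fgen, if_pos hu, if_neg hv]
    rw [hconv Γ hE a v hvB]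
    exact hom_braid _ _ _ _ (braid_mk Γ Set.subset_union_left hE huv)
  · have huB : u ∈ B0 Γ a := by
      show Γ.Adj a u
      rw [← hv]
      exact Γ.symm huv
    simp only [fgen, if_pos hv, if_neg hu]
    rw [hconv Γ hE a u huB]
    exact hom_braid _ _ _ _ (braid_mk Γ Set.subset_union_left hE huv)
  · simp only [fgen, if_neg hu, if_neg hv]
    exact hom_braid _ _ _ _ (braid_mk Γ Set.subset_union_left hE huv)

noncomputable def fhom : Γ.ArtinGroup →* PushoutI (φP Γ hE a) :=
  PresentedGroup.toGroup (lift_artin_rels Γ hE (fgen Γ hE a) (fgen_braid Γ hE a))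

@[simp] lemma fhom_of (v : V) : fhom Γ hE a (PresentedGroup.of v) = fgen Γ hE a v :=
  PresentedGroup.toGroup.of _

noncomputable def fQ (S : Set V) : Q Γ S →* Γ.ArtinGroup :=
  qHom Γ hE S (fun v => if v ∈ S then PresentedGroup.of v else 1)
    (braid_ite Γ (subset_refl _) hE S) (fun v hv => if_neg hv)

noncomputable def fQi (i : Bool) : Gi Γ a i →* Γ.ArtinGroup :=
  match i with
  | false => fQ Γ hE (St Γ a)
  | true => fQ Γ hE (Sc a)

lemma fQi_comp : ∀ i, (fQi Γ hE a i).comp (φP Γ hE a i)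
    = (fQi Γ hE a false).comp (φP Γ hE a false) := by
  intro i; cases i
  · rfl
  · apply PresentedGroup.ext
    intro x
    show fQ Γ hE (Sc a) (up Γ hE (B0_subset_Sc Γ a) (PresentedGroup.of x))
      = fQ Γ hE (St Γ a) (up Γ hE (B0_subset_St Γ a) (PresentedGroup.of x))
    by_cases hx : x ∈ B0 Γ a
    · have hx1 : x ∈ Sc a := B0_subset_Sc Γ a hx
      have hx0 : x ∈ St Γ a := B0_subset_St Γ a hx
      simp [up, fQ, hx, hx1, hx0]
    · simp [up, fQ, hx]

noncomputable def ψ : PushoutI (φP Γ hE a) →* Γ.ArtinGroup :=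
  PushoutI.lift (fQi Γ hE a) ((fQi Γ hE a false).comp (φP Γ hE a false)) (fQi_comp Γ hE a)

set_option maxHeartbeats 2000000 in
@[simp] lemma ψ_of_false (q : Q Γ (St Γ a)) :
    ψ Γ hE a (PushoutI.of (φ := φP Γ hE a) false q) = fQ Γ hE (St Γ a) q :=
  PushoutI.lift_of (fQi Γ hE a) ((fQi Γ hE a false).comp (φP Γ hE a false)) (fQi_comp Γ hE a)
    (i := false) q

set_option maxHeartbeats 2000000 in
@[simp] lemma ψ_of_true (q : Q Γ (Sc a)) :
    ψ Γ hE a (PushoutI.of (φ := φP Γ hE a) true q) = fQ Γ hE (Sc a) q :=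
  PushoutI.lift_of (fQi Γ hE a) ((fQi Γ hE a false).comp (φP Γ hE a false)) (fQi_comp Γ hE a)
    (i := true) q

lemma ψ_fhom (g : Γ.ArtinGroup) : ψ Γ hE a (fhom Γ hE a g) = g := by
  have h : (ψ Γ hE a).comp (fhom Γ hE a) = MonoidHom.id _ := by
    apply PresentedGroup.ext
    intro x
    simp only [MonoidHom.comp_apply, MonoidHom.id_apply, fhom_of]
    by_cases hx : x = a
    · have hx0 : x ∈ St Γ a := by rw [hx]; exact a_mem_St Γ a
      simp only [fgen, if_pos hx]
      rw [ψ_of_false]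
      simp [fQ, hx0]
    · have hx1 : x ∈ Sc a := by
        simp only [Sc, Set.mem_compl_iff, Set.mem_singleton_iff]
        exact hx
      simp only [fgen, if_neg hx]
      rw [ψ_of_true]
      simp [fQ, hx1]
  exact DFunLike.congr_fun h g

lemma fQ_mem_parabolic (q : Q Γ (St Γ a)) :
    fQ Γ hE (St Γ a) q ∈ Γ.parabolic (St Γ a) := by
  refine PresentedGroup.generated_by _ ((Γ.parabolic (St Γ a)).comap (fQ Γ hE (St Γ a))) ?_ q
  intro j
  simp only [Subgroup.mem_comap]
  by_cases hj : j ∈ St Γ a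
  · have h1 : fQ Γ hE (St Γ a) (PresentedGroup.of j) = PresentedGroup.of j := by
      simp [fQ, hj]
    rw [h1]
    exact Subgroup.subset_closure ⟨j, hj, rfl⟩
  · have h1 : fQ Γ hE (St Γ a) (PresentedGroup.of j) = 1 := by
      simp [fQ, hj]
    rw [h1]
    exact Subgroup.one_mem _

lemma conj_not_in_range (y : Q Γ (St Γ a)) :
    y * PresentedGroup.of a * y⁻¹ ∉ (φP Γ hE a false).range := by
  rintro ⟨c, hc⟩
  have hDbase : (DHom Γ hE a (a_mem_St Γ a)).comp (φP Γ hE a false) = 1 := by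
    apply PresentedGroup.ext
    intro x
    show DHom Γ hE a (a_mem_St Γ a) (up Γ hE (B0_subset_St Γ a) (PresentedGroup.of x)) = _
    by_cases hxB : x ∈ B0 Γ a
    · have hxa : x ≠ a := fun h => a_not_mem_B0 Γ a (h ▸ hxB)
      simp [up, DHom, hxB, hxa]
    · simp [up, DHom, hxB]
  have h1 : DHom Γ hE a (a_mem_St Γ a) (φP Γ hE a false c) = 1 := by
    have h2 := DFunLike.congr_fun hDbase c
    exact h2
  erw [hc, map_mul, map_mul, map_inv] at h1
  have h2 : DHom Γ hE a (a_mem_St Γ a) (PresentedGroup.of a) = Multiplicative.ofAdd 1 := by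
    simp [DHom]
  rw [h2] at h1
  have h3 := congrArg Multiplicative.toAdd h1
  simp only [toAdd_mul, toAdd_inv, toAdd_one, toAdd_ofAdd] at h3
  omega



theorem centralizer_le_star_parabolic'
    {V : Type} (Γ : LabeledGraph V) (hE : Γ.IsEven) (a : V) :
    Subgroup.centralizer {Γ.gen a} ≤ Γ.parabolic (insert a {v | Γ.Adj a v}) := by
  intro g hgmem
  have hcomm : Γ.gen a * g = g * Γ.gen a :=
    Subgroup.mem_centralizer_iff.1 hgmem _ rfl
  have hfg : fhom Γ hE a g * PushoutI.of (φ := φP Γ hE a) false (PresentedGroup.of a)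
      = PushoutI.of (φ := φP Γ hE a) false (PresentedGroup.of a) * fhom Γ hE a g := by
    have h := congrArg (fhom Γ hE a) hcomm
    rw [map_mul, map_mul] at h
    have ha' : fhom Γ hE a (Γ.gen a)
        = PushoutI.of (φ := φP Γ hE a) false (PresentedGroup.of a) := by
      show fhom Γ hE a (PresentedGroup.of a) = _
      rw [fhom_of]
      simp [fgen]
    rw [ha'] at h
    exact h.symm
  obtain ⟨q, hq⟩ := CentStarAux.mem_of_range_of_commute (φP_injective Γ hE a) false
    (PresentedGroup.of a) (conj_not_in_range Γ hE a) (fhom Γ hE a g) hfg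
  have hg' : g = fQ Γ hE (St Γ a) q := by
    erw [← ψ_fhom Γ hE a g, ← hq, ψ_of_false]
  rw [show (insert a {v | Γ.Adj a v} : Set V) = St Γ a from rfl, hg']
  exact fQ_mem_parabolic Γ hE a q


end CentStarAux3

/-- A group is finitely presented if it is isomorphic to the quotient of a
finitely generated free group by finitely many relations. -/
def IsFinitelyPresentedGroup (G : Type*) [Group G] : Prop :=
  ∃ (n : ℕ) (rels : Set (FreeGroup (Fin n))), rels.Finite ∧
    Nonempty (PresentedGroup rels ≃* G)

/-- A group is coherent if every finitely generated subgroup is finitely presented. -/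
def IsCoherentGroup (G : Type*) [Group G] : Prop :=
  ∀ H : Subgroup G, H.FG → IsFinitelyPresentedGroup H


/-- In an even Artin group of FC-type, the centralizer of a standard
generator `a` is contained in the standard parabolic subgroup on the star of `a`. -/
theorem centralizer_le_star_parabolic
    {V : Type} [Finite V] (Γ : LabeledGraph V) (hFC : Γ.IsEvenFC) (a : V) :
    Subgroup.centralizer {Γ.gen a} ≤ Γ.parabolic (insert a {v | Γ.Adj a v}) := by
  exact CentStarAux3.centralizer_le_star_parabolic' Γ hFC.1 a
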